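/- arXiv:2310.01784 — 2 statements merged into one kernel-verified Lean document; each statement's English description precedes it below -/
import Mathlib

section
/- Suppose x* ∈ ℝⁿ satisfies second-order sufficient conditions with strict complementarity for min f(x) subject to x ≥ 0: x* ≥ 0, ∇f(x*) ≥ 0, x*_i [∇f(x*)]_i = 0 with x*_i + [∇f(x*)]_i > 0 for each i, and wᵀ∇²f(x*)w > 0 for all w ≠ 0 with w_i = 0 whenever x*_i = 0. Define v* by v*_i = √(x*_i). Then ∇F(v*) = 0 and ∇²F(v*) is positive definite, where F(v) = f(v ⊙ v). -/
noncomputable def grad {n : ℕ} (f : (Fin n → ℝ) → ℝ) (x : Fin n → ℝ) (i : Fin n) : ℝ :=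
  fderiv ℝ f x (Pi.single i 1)

noncomputable def hessQ {n : ℕ} (f : (Fin n → ℝ) → ℝ) (x w : Fin n → ℝ) : ℝ :=
  fderiv ℝ (fun y => fderiv ℝ f y w) x w

open ContinuousLinearMap in
noncomputable def mulCLM {n : ℕ} (c : Fin n → ℝ) : (Fin n → ℝ) →L[ℝ] (Fin n → ℝ) :=
  ContinuousLinearMap.pi fun i => c i • ContinuousLinearMap.proj i

lemma mulCLM_apply {n : ℕ} (c s : Fin n → ℝ) : mulCLM c s = c * s := by
  funext i; simp [mulCLM, mul_comm]

lemma hasFDerivAt_sq {n : ℕ} (v : Fin n → ℝ) :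
    HasFDerivAt (fun v : Fin n → ℝ => v * v) (mulCLM (2 * v)) v := by
  rw [hasFDerivAt_pi']
  intro i
  have h := ((ContinuousLinearMap.proj i : (Fin n → ℝ) →L[ℝ] ℝ).hasFDerivAt (x := v)).mul
    ((ContinuousLinearMap.proj i : (Fin n → ℝ) →L[ℝ] ℝ).hasFDerivAt (x := v))
  refine h.congr_fderiv ?_
  ext s
  simp [mulCLM]
  ring

lemma clm_eq_sum {n : ℕ} (L : (Fin n → ℝ) →L[ℝ] ℝ) (w : Fin n → ℝ) :
    L w = ∑ i, w i * L (Pi.single i 1) := by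
  have := L.toLinearMap.pi_apply_eq_sum_univ w
  rw [show (L w : ℝ) = L.toLinearMap w from rfl, this]
  refine Finset.sum_congr rfl fun i _ => ?_
  have hs : (Pi.single i 1 : Fin n → ℝ) = fun j => if i = j then 1 else 0 := by
    funext j; simp [Pi.single_apply, eq_comm]
  rw [hs, smul_eq_mul]
  rfl

lemma fderivF {n : ℕ} (f : (Fin n → ℝ) → ℝ) (hf : ContDiff ℝ 2 f)
    (F : (Fin n → ℝ) → ℝ) (hF : ∀ v, F v = f (v * v)) (y : Fin n → ℝ) :
    fderiv ℝ F y = (fderiv ℝ f (y * y)).comp (mulCLM (2 * y)) := by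
  have h1 : HasFDerivAt f (fderiv ℝ f (y * y)) (y * y) :=
    (hf.differentiable (by norm_num)).differentiableAt.hasFDerivAt
  have h2 := HasFDerivAt.comp (f := fun v : Fin n → ℝ => v * v) y h1 (hasFDerivAt_sq y)
  have h3 : HasFDerivAt F ((fderiv ℝ f (y * y)).comp (mulCLM (2 * y))) y := by
    apply h2.congr_of_eventuallyEq
    filter_upwards with z using (hF z).symm ▸ rfl
  exact h3.fderiv

lemma hessF {n : ℕ} (f : (Fin n → ℝ) → ℝ) (hf : ContDiff ℝ 2 f)
    (F : (Fin n → ℝ) → ℝ) (hF : ∀ v, F v = f (v * v))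
    (vs : Fin n → ℝ) (s : Fin n → ℝ) :
    hessQ F vs s = hessQ f (vs * vs) ((2 * vs) * s) + fderiv ℝ f (vs * vs) (2 * (s * s)) := by
  set D := fderiv ℝ f with hD
  have hDdiff : Differentiable ℝ D := by
    have := (hf.fderiv_right (m := 1) le_rfl)
    exact this.differentiable one_ne_zero
  set B := fderiv ℝ D (vs * vs) with hB
  -- derivative of y ↦ D (y * y) at vs
  have hc : HasFDerivAt (fun y : Fin n → ℝ => D (y * y)) (B.comp (mulCLM (2 * vs))) vs :=
    HasFDerivAt.comp (f := fun v : Fin n → ℝ => v * v) vs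
      (hDdiff.differentiableAt.hasFDerivAt) (hasFDerivAt_sq vs)
  -- the function y ↦ fderiv F y s
  have hfun : (fun y => fderiv ℝ F y s) = fun y => (D (y * y)) ((mulCLM (2 * s)) y) := by
    funext y
    rw [fderivF f hf F hF y]
    simp only [ContinuousLinearMap.comp_apply, mulCLM_apply]
    congr 1
    ring
  have hu : HasFDerivAt (fun y : Fin n → ℝ => (mulCLM (2 * s)) y) (mulCLM (2 * s)) vs :=
    (mulCLM (2 * s)).hasFDerivAt
  have key := hc.clm_apply hu
  have hval : hessQ F vs s = ((D (vs * vs)).comp (mulCLM (2 * s))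
      + (B.comp (mulCLM (2 * vs))).flip ((mulCLM (2 * s)) vs)) s := by
    rw [hessQ, hfun, key.fderiv]
  rw [hval]
  -- now compute hessQ f (vs*vs) w = (B w) w
  have hw : hessQ f (vs * vs) ((2 * vs) * s) = (B ((2 * vs) * s)) ((2 * vs) * s) := by
    have hc2 : HasFDerivAt D B (vs * vs) := hDdiff.differentiableAt.hasFDerivAt
    have hu2 : HasFDerivAt (fun _ : Fin n → ℝ => (2 * vs) * s) (0 : (Fin n → ℝ) →L[ℝ] (Fin n → ℝ)) (vs * vs) :=
      hasFDerivAt_const _ _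
    have k2 := hc2.clm_apply hu2
    rw [hessQ, k2.fderiv]
    simp
  rw [hw]
  simp only [ContinuousLinearMap.add_apply, ContinuousLinearMap.comp_apply,
    ContinuousLinearMap.flip_apply, mulCLM_apply]
  have e1 : (2 : Fin n → ℝ) * s * vs = (2 * vs) * s := by ring
  have e2 : (2 : Fin n → ℝ) * s * s = 2 * (s * s) := by ring
  rw [e1, e2]
  ring

theorem stmt4 {n : ℕ} (f : (Fin n → ℝ) → ℝ) (hf : ContDiff ℝ 2 f)
    (F : (Fin n → ℝ) → ℝ) (hF : ∀ v, F v = f (v * v))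
    (xs : Fin n → ℝ)
    (hx : ∀ i, 0 ≤ xs i)
    (hg : ∀ i, 0 ≤ grad f xs i)
    (hcomp : ∀ i, xs i * grad f xs i = 0)
    (hstrict : ∀ i, 0 < xs i + grad f xs i)
    (h2 : ∀ w : Fin n → ℝ, w ≠ 0 → (∀ i, xs i = 0 → w i = 0) → 0 < hessQ f xs w)
    (vs : Fin n → ℝ) (hv : ∀ i, vs i = Real.sqrt (xs i)) :
    fderiv ℝ F vs = 0 ∧ ∀ s : Fin n → ℝ, s ≠ 0 → 0 < hessQ F vs s := by
  have hvx : vs * vs = xs := by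
    funext i
    simp [Pi.mul_apply, hv i, Real.mul_self_sqrt (hx i)]
  have hgr : ∀ i, (fderiv ℝ f xs) (Pi.single i 1) = grad f xs i := fun i => rfl
  have vgrad : ∀ i, vs i * grad f xs i = 0 := by
    intro i
    by_cases h : xs i = 0
    · rw [hv i, h, Real.sqrt_zero, zero_mul]
    · rw [(mul_eq_zero.mp (hcomp i)).resolve_left h, mul_zero]
  constructor
  · ext s
    rw [fderivF f hf F hF vs, hvx]
    simp only [ContinuousLinearMap.comp_apply, mulCLM_apply, ContinuousLinearMap.zero_apply]
    rw [clm_eq_sum]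
    apply Finset.sum_eq_zero
    intro i _
    rw [hgr i]
    simp only [Pi.mul_apply, Pi.ofNat_apply]
    linear_combination (2 * s i) * vgrad i
  · intro s hs
    rw [hessF f hf F hF vs s, hvx]
    set w : Fin n → ℝ := (2 * vs) * s with hwdef
    have hwi : ∀ i, w i = 2 * vs i * s i := by intro i; simp [hwdef, Pi.mul_apply]
    have hA : 0 ≤ fderiv ℝ f xs (2 * (s * s)) := by
      rw [clm_eq_sum]
      apply Finset.sum_nonneg
      intro i _
      rw [hgr i]
      simp only [Pi.mul_apply, Pi.ofNat_apply]
      have : (0:ℝ) ≤ 2 * (s i * s i) := mul_nonneg (by norm_num) (mul_self_nonneg _)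
      exact mul_nonneg this (hg i)
    have hsupp : ∀ i, xs i = 0 → w i = 0 := by
      intro i h
      rw [hwi i, hv i, h, Real.sqrt_zero]
      ring
    have hHnn : 0 ≤ hessQ f xs w := by
      by_cases hw : w = 0
      · rw [hw, hessQ]
        simp
      · exact (h2 w hw hsupp).le
    by_cases hcase : ∃ i, xs i = 0 ∧ s i ≠ 0
    · obtain ⟨i, hxi, hsi⟩ := hcase
      have hgi : 0 < grad f xs i := by have := hstrict i; rw [hxi] at this; linarith
      have hApos : 0 < fderiv ℝ f xs (2 * (s * s)) := by
        rw [clm_eq_sum]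
        apply Finset.sum_pos'
        · intro j _
          rw [hgr j]
          simp only [Pi.mul_apply, Pi.ofNat_apply]
          have : (0:ℝ) ≤ 2 * (s j * s j) := mul_nonneg (by norm_num) (mul_self_nonneg _)
          exact mul_nonneg this (hg j)
        · refine ⟨i, Finset.mem_univ i, ?_⟩
          rw [hgr i]
          simp only [Pi.mul_apply, Pi.ofNat_apply]
          have : (0:ℝ) < 2 * (s i * s i) := by
            have := mul_self_pos.mpr hsi
            linarith
          exact mul_pos this hgi
      exact add_pos_of_nonneg_of_pos hHnn hApos
    · push_neg at hcase
      have hwne : w ≠ 0 := by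
        obtain ⟨i, hsi⟩ := Function.ne_iff.mp hs
        simp only [Pi.zero_apply] at hsi
        have hxi : xs i ≠ 0 := fun h => hsi (hcase i h)
        have hvi : 0 < vs i := by
          rw [hv i]
          exact Real.sqrt_pos.mpr (lt_of_le_of_ne (hx i) (Ne.symm hxi))
        intro h
        have := congrFun h i
        rw [hwi i] at this
        simp only [Pi.zero_apply] at this
        rcases mul_eq_zero.mp this with h' | h'
        · rcases mul_eq_zero.mp h' with h'' | h''
          · norm_num at h''
          · exact hvi.ne' h''
        · exact hsi h'
      exact add_pos_of_pos_of_nonneg (h2 w hwne hsupp) hA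
end

section
/- Suppose ∇F(v*) = 0 and ∇²F(v*) is positive definite, where F(v) = f(v⊙v). Let x* = v* ⊙ v*. Then x* satisfies second-order sufficient conditions with strict complementarity for min f(x) subject to x ≥ 0: x* ≥ 0, ∇f(x*) ≥ 0, for each i exactly one of x*_i and [∇f(x*)]_i is nonzero, and wᵀ∇²f(x*)w > 0 for all w ≠ 0 with w_i = 0 whenever x*_i = 0. -/
section Aux
variable {n : ℕ}

lemma clm_sum (L : (Fin n → ℝ) →L[ℝ] ℝ) (w : Fin n → ℝ) :
    L w = ∑ i, w i * L (Pi.single i 1) := by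
  have h : ∀ i : Fin n, (fun j => if i = j then (1:ℝ) else 0) = Pi.single i 1 := by
    intro i; ext j; simp [Pi.single_apply, eq_comm]
  conv_lhs => rw [pi_eq_sum_univ w]
  rw [map_sum]
  refine Finset.sum_congr rfl fun i _ => ?_
  rw [h i, map_smul, smul_eq_mul]

noncomputable def sqD (v : Fin n → ℝ) : (Fin n → ℝ) →L[ℝ] (Fin n → ℝ) :=
  v • (ContinuousLinearMap.id ℝ (Fin n → ℝ)) + (ContinuousLinearMap.id ℝ (Fin n → ℝ)).smulRight v

lemma sqD_apply (v s : Fin n → ℝ) : sqD v s = 2 * (v * s) := by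
  simp [sqD, smul_eq_mul]; ring

lemma sq_hasFDerivAt (v : Fin n → ℝ) :
    HasFDerivAt (fun y : Fin n → ℝ => y * y) (sqD v) v :=
  (hasFDerivAt_id v).mul' (hasFDerivAt_id v)

lemma F_hasFDerivAt (f : (Fin n → ℝ) → ℝ) (hf : ContDiff ℝ 2 f)
    (F : (Fin n → ℝ) → ℝ) (hF : ∀ v, F v = f (v * v)) (v : Fin n → ℝ) :
    HasFDerivAt F ((fderiv ℝ f (v * v)).comp (sqD v)) v := by
  have hfd : Differentiable ℝ f := hf.differentiable (by norm_num)
  have h : HasFDerivAt (f ∘ fun y : Fin n → ℝ => y * y)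
      ((fderiv ℝ f (v * v)).comp (sqD v)) v :=
    HasFDerivAt.comp (f := fun y : Fin n → ℝ => y * y) v
      ((hfd (v * v)).hasFDerivAt) (sq_hasFDerivAt v)
  exact h.congr_of_eventuallyEq (by filter_upwards with y using (hF y))

lemma fderiv_F_eq (f : (Fin n → ℝ) → ℝ) (hf : ContDiff ℝ 2 f)
    (F : (Fin n → ℝ) → ℝ) (hF : ∀ v, F v = f (v * v)) (v : Fin n → ℝ) :
    fderiv ℝ F v = (fderiv ℝ f (v * v)).comp (sqD v) :=
  (F_hasFDerivAt f hf F hF v).fderiv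

lemma hessQ_eq (f : (Fin n → ℝ) → ℝ) (hf : ContDiff ℝ 2 f) (x u : Fin n → ℝ) :
    hessQ f x u = (fderiv ℝ (fderiv ℝ f) x u) u := by
  have hfd' : Differentiable ℝ (fderiv ℝ f) :=
    (hf.fderiv_right (m := 1) (by norm_num)).differentiable one_ne_zero
  have h : HasFDerivAt (fun y => fderiv ℝ f y u)
      ((ContinuousLinearMap.apply ℝ ℝ u).comp (fderiv ℝ (fderiv ℝ f) x)) x :=
    HasFDerivAt.comp (f := fderiv ℝ f) x
      (ContinuousLinearMap.hasFDerivAt (ContinuousLinearMap.apply ℝ ℝ u)) (hfd' x).hasFDerivAt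
  rw [hessQ, h.fderiv]
  rfl

lemma hessQ_F (f : (Fin n → ℝ) → ℝ) (hf : ContDiff ℝ 2 f)
    (F : (Fin n → ℝ) → ℝ) (hF : ∀ v, F v = f (v * v)) (v s : Fin n → ℝ) :
    hessQ F v s = hessQ f (v * v) (2 * (v * s)) + fderiv ℝ f (v * v) (2 * (s * s)) := by
  have hfd' : Differentiable ℝ (fderiv ℝ f) :=
    (hf.fderiv_right (m := 1) (by norm_num)).differentiable one_ne_zero
  set c : (Fin n → ℝ) →L[ℝ] (Fin n → ℝ) :=
    (2:ℝ) • ContinuousLinearMap.mul ℝ (Fin n → ℝ) s with hc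
  have hcapp : ∀ y, c y = 2 * (s * y) := by
    intro y; ext i; simp [hc]
  have hφ : HasFDerivAt (fun y : Fin n → ℝ => fderiv ℝ f (y * y))
      ((fderiv ℝ (fderiv ℝ f) (v * v)).comp (sqD v)) v :=
    HasFDerivAt.comp (f := fun y : Fin n → ℝ => y * y) v
      (hfd' (v * v)).hasFDerivAt (sq_hasFDerivAt v)
  have h := hφ.clm_apply c.hasFDerivAt
  have heq : (fun y : Fin n → ℝ => fderiv ℝ F y s) =
      fun y => fderiv ℝ f (y * y) (c y) := by
    funext y
    rw [fderiv_F_eq f hf F hF y]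
    show fderiv ℝ f (y * y) (sqD y s) = _
    rw [sqD_apply, hcapp, mul_comm y s]
  rw [hessQ, heq, h.fderiv]
  simp only [ContinuousLinearMap.add_apply, ContinuousLinearMap.coe_comp', Function.comp_apply,
    ContinuousLinearMap.flip_apply]
  rw [hessQ_eq f hf, sqD_apply, hcapp, hcapp, mul_comm s v]
  ring

end Aux

theorem stmt5 {n : ℕ} (f : (Fin n → ℝ) → ℝ) (hf : ContDiff ℝ 2 f)
    (F : (Fin n → ℝ) → ℝ) (hF : ∀ v, F v = f (v * v))
    (vs : Fin n → ℝ)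
    (hgrad : fderiv ℝ F vs = 0)
    (hpd : ∀ s : Fin n → ℝ, s ≠ 0 → 0 < hessQ F vs s)
    (xs : Fin n → ℝ) (hxdef : xs = vs * vs) :
    (∀ i, 0 ≤ xs i) ∧ (∀ i, 0 ≤ grad f xs i) ∧
      (∀ i, (xs i ≠ 0 ∧ grad f xs i = 0) ∨ (xs i = 0 ∧ grad f xs i ≠ 0)) ∧
      (∀ w : Fin n → ℝ, w ≠ 0 → (∀ i, xs i = 0 → w i = 0) → 0 < hessQ f xs w) := by
  -- complementarity from the gradient condition
  have key1 : ∀ i, vs i * grad f xs i = 0 := by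
    intro i
    have h0 : fderiv ℝ F vs (Pi.single i 1) = 0 := by rw [hgrad]; rfl
    rw [fderiv_F_eq f hf F hF vs] at h0
    have h1 : sqD vs (Pi.single i 1) = (2 * vs i) • (Pi.single i 1 : Fin n → ℝ) := by
      rw [sqD_apply]; ext j
      by_cases hji : j = i <;> simp [hji, Pi.single_apply]
    have h2 : fderiv ℝ f (vs * vs) ((2 * vs i) • (Pi.single i 1 : Fin n → ℝ))
        = (2 * vs i) * fderiv ℝ f (vs * vs) (Pi.single i 1) := by
      rw [map_smul, smul_eq_mul]
    simp only [ContinuousLinearMap.coe_comp', Function.comp_apply] at h0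
    rw [h1, h2] at h0
    rw [grad, hxdef]
    nlinarith [h0]
  -- strict positivity of the gradient where vs vanishes
  have key2 : ∀ i, vs i = 0 → 0 < grad f xs i := by
    intro i hvi
    have hsne : (Pi.single i 1 : Fin n → ℝ) ≠ 0 := by
      intro h
      have := congrFun h i
      simp at this
    have hp := hpd _ hsne
    rw [hessQ_F f hf F hF vs (Pi.single i 1)] at hp
    have hz : (2 : Fin n → ℝ) * (vs * Pi.single i 1) = 0 := by
      ext j
      by_cases hji : j = i <;> simp [hji, Pi.single_apply, hvi]
    have hss : (2 : Fin n → ℝ) * (Pi.single i 1 * Pi.single i 1)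
        = (2:ℝ) • (Pi.single i 1 : Fin n → ℝ) := by
      ext j
      by_cases hji : j = i <;> simp [hji, Pi.single_apply]
    rw [hz, hss] at hp
    have h0 : hessQ f (vs * vs) 0 = 0 := by
      rw [hessQ]
      exact (fderiv ℝ _ _).map_zero
    rw [h0, map_smul, smul_eq_mul] at hp
    rw [grad, hxdef]
    linarith
  refine ⟨fun i => by rw [hxdef]; exact mul_self_nonneg _, ?_, ?_, ?_⟩
  · intro i
    by_cases hvi : vs i = 0
    · exact (key2 i hvi).le
    · have := key1 i
      have : grad f xs i = 0 := by
        rcases mul_eq_zero.mp this with h | h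
        · exact absurd h hvi
        · exact h
      rw [this]
  · intro i
    by_cases hvi : vs i = 0
    · right
      exact ⟨by rw [hxdef]; simp [hvi], (key2 i hvi).ne'⟩
    · left
      refine ⟨by rw [hxdef]; exact mul_ne_zero hvi hvi, ?_⟩
      rcases mul_eq_zero.mp (key1 i) with h | h
      · exact absurd h hvi
      · exact h
  · intro w hw hwz
    set s : Fin n → ℝ := fun i => if vs i = 0 then 0 else w i / (2 * vs i) with hs
    have hvs : (2 : Fin n → ℝ) * (vs * s) = w := by
      ext i
      by_cases hvi : vs i = 0
      · have : xs i = 0 := by rw [hxdef]; simp [hvi]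
        simp [hs, hvi, hwz i this]
      · simp only [hs, Pi.mul_apply, hvi, if_false]
        field_simp
        exact mul_comm _ _
    have hsne : s ≠ 0 := by
      intro h
      apply hw
      ext i
      by_cases hvi : vs i = 0
      · exact hwz i (by rw [hxdef]; simp [hvi])
      · have hsi : s i = 0 := by rw [h]; rfl
        simp only [hs, hvi, if_false] at hsi
        have h2 : (2 : ℝ) * vs i ≠ 0 := by
          simp [hvi]
        have := (div_eq_zero_iff.mp hsi).resolve_right h2
        simpa using this
    have hp := hpd s hsne
    rw [hessQ_F f hf F hF vs s, hvs, ← hxdef] at hp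
    have hzero : fderiv ℝ f xs (2 * (s * s)) = 0 := by
      rw [clm_sum]
      refine Finset.sum_eq_zero fun i _ => ?_
      by_cases hvi : vs i = 0
      · have : s i = 0 := by simp [hs, hvi]
        simp [Pi.mul_apply, this]
      · have hg : grad f xs i = 0 := by
          rcases mul_eq_zero.mp (key1 i) with h | h
          · exact absurd h hvi
          · exact h
        rw [grad] at hg
        simp [hg]
    rw [hzero] at hp
    linarith
end
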